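/- Suppose k is an algebraically closed field, R is a finite-dimensional k-algebra, and A is a finite-dimensional indecomposable R-module. Then for any field extension F of k, the base change F ⊗_k A is an indecomposable module over the F-algebra F ⊗_k R. -/

import Mathlib

set_option synthInstance.maxHeartbeats 1000000
set_option maxHeartbeats 1000000

open TensorProduct

namespace BCIndec

section RingAux
variable {B : Type*} [Ring B]

lemma pow_mul_pow_left {n a : B} (h : a * n = 1) : ∀ j : ℕ, a ^ j * n ^ j = 1
  | 0 => by simp
  | (j+1) => by
    rw [pow_succ a j, pow_succ' n j, mul_assoc, ← mul_assoc a n, h, one_mul]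
    exact pow_mul_pow_left h j

lemma pow_mul_pow_right {n a : B} (h : n * a = 1) : ∀ j : ℕ, n ^ j * a ^ j = 1
  | 0 => by simp
  | (j+1) => by
    rw [pow_succ n j, pow_succ' a j, mul_assoc, ← mul_assoc n a, h, one_mul]
    exact pow_mul_pow_right h j

variable [Nontrivial B]

lemma not_isUnit_mul_right {n : B} (hn : IsNilpotent n) (x : B) : ¬ IsUnit (x * n) := by
  intro h
  obtain ⟨z, hz⟩ := h.exists_left_inv
  obtain ⟨m, hm⟩ := hn
  have h1 : (z * x) * n = 1 := by rw [mul_assoc]; exact hz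
  have := pow_mul_pow_left h1 m
  rw [hm, mul_zero] at this
  exact zero_ne_one this

lemma not_isUnit_mul_left {n : B} (hn : IsNilpotent n) (x : B) : ¬ IsUnit (n * x) := by
  intro h
  obtain ⟨z, hz⟩ := h.exists_right_inv
  obtain ⟨m, hm⟩ := hn
  have h1 : n * (x * z) = 1 := by rw [← mul_assoc]; exact hz
  have := pow_mul_pow_right h1 m
  rw [hm, zero_mul] at this
  exact zero_ne_one this

lemma nil_mul (hd : ∀ x : B, IsUnit x ∨ IsNilpotent x) {n : B} (hn : IsNilpotent n) (x : B) : IsNilpotent (x * n) :=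
  (hd _).resolve_left (not_isUnit_mul_right hn x)

lemma mul_nil (hd : ∀ x : B, IsUnit x ∨ IsNilpotent x) {n : B} (hn : IsNilpotent n) (x : B) : IsNilpotent (n * x) :=
  (hd _).resolve_left (not_isUnit_mul_left hn x)

lemma nil_add (hd : ∀ x : B, IsUnit x ∨ IsNilpotent x) {n₁ n₂ : B} (h1 : IsNilpotent n₁) (h2 : IsNilpotent n₂) :
    IsNilpotent (n₁ + n₂) := by
  rcases hd (n₁ + n₂) with hu | hn
  · exfalso
    obtain ⟨z, hz⟩ := hu.exists_left_inv
    rw [mul_add] at hz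
    have t1 : IsNilpotent (z * n₁) := nil_mul hd h1 z
    have t2 : IsNilpotent (z * n₂) := nil_mul hd h2 z
    have hu2 : IsUnit (z * n₂) := by
      have : z * n₂ = 1 - z * n₁ := by rw [← hz]; abel
      rw [this]; exact t1.isUnit_one_sub
    obtain ⟨m, hm⟩ := t2
    have := hu2.pow m
    rw [hm] at this
    exact not_isUnit_zero this
  · exact hn

end RingAux

section AlgAux
variable {k : Type*} [Field k] {B : Type*} [Ring B] [Algebra k B] [Nontrivial B]

lemma smul_one_nilpotent_eq_zero {t : k} (h : IsNilpotent (t • (1 : B))) : t = 0 := by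
  by_contra ht
  obtain ⟨m, hm⟩ := h
  rw [smul_pow, one_pow] at hm
  have : (1 : B) = (t ^ m)⁻¹ • ((t ^ m) • (1 : B)) := (inv_smul_smul₀ (pow_ne_zero m ht) 1).symm
  rw [hm, smul_zero] at this
  exact one_ne_zero this

lemma nil_smul (hd : ∀ x : B, IsUnit x ∨ IsNilpotent x) {n : B} (hn : IsNilpotent n) (c : k) :
    IsNilpotent (c • n) := by
  have : c • n = (c • (1:B)) * n := by rw [smul_mul_assoc, one_mul]
  rw [this]
  exact nil_mul hd hn _

lemma dichotomy_of_eig (he : ∀ x : B, ∃ c : k, IsNilpotent (x - c • 1)) :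
    ∀ x : B, IsUnit x ∨ IsNilpotent x := by
  intro x
  obtain ⟨c, hc⟩ := he x
  by_cases h0 : c = 0
  · right; subst h0; simpa using hc
  · left
    have hu : IsUnit (c • (1 : B)) := by
      rw [← Algebra.algebraMap_eq_smul_one]
      exact (isUnit_iff_ne_zero.mpr h0).map (algebraMap k B)
    have hcomm : Commute (x - c • 1) (c • (1 : B)) := by
      have h := Algebra.commutes c (x - c • 1)
      rw [Algebra.algebraMap_eq_smul_one] at h
      exact (Commute.symm h)
    have := hc.isUnit_add_left_of_commute hu hcomm
    rwa [show c • (1:B) + (x - c • 1) = x by abel] at this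

end AlgAux

end BCIndec

namespace BCIndec

section Main
variable {k : Type*} [Field k] [IsAlgClosed k]
    {R : Type*} [Ring R] [Algebra k R] [FiniteDimensional k R]
    {A : Type*} [AddCommGroup A] [Module R A] [Module k A] [IsScalarTower k R A]
    [FiniteDimensional k A]

lemma end_nontrivial [Nontrivial A] : Nontrivial (Module.End R A) := by
  obtain ⟨a, ha⟩ := exists_ne (0 : A)
  refine ⟨1, 0, fun h => ha ?_⟩
  have := LinearMap.ext_iff.mp h a
  simpa using this

lemma eig_nil [Nontrivial A]
    (hA2 : ∀ p q : Submodule R A, IsCompl p q → p = ⊥ ∨ q = ⊥)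
    (x : Module.End R A) : ∃ c : k, IsNilpotent (x - c • 1) := by
  haveI : IsArtinian R A := isArtinian_of_tower k inferInstance
  haveI : IsNoetherian R A := isNoetherian_of_tower k inferInstance
  obtain ⟨c, hc⟩ := Module.End.exists_eigenvalue (LinearMap.restrictScalars k x : Module.End k A)
  obtain ⟨a, ha⟩ := hc.exists_hasEigenvector
  refine ⟨c, ?_⟩
  set y : Module.End R A := x - c • 1 with hy
  have hya : y a = 0 := by
    have hxa : x a = c • a := ha.apply_eq_smul
    simp [hy, LinearMap.sub_apply, LinearMap.smul_apply, Module.End.one_apply, hxa]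
  obtain ⟨m, hm⟩ := Filter.eventually_atTop.mp
    (LinearMap.eventually_isCompl_ker_pow_range_pow y)
  have hcom := hm (max m 1) (le_max_left _ _)
  rcases hA2 _ _ hcom with hker | hrange
  · exfalso
    obtain ⟨m0, hm0⟩ := Nat.exists_eq_succ_of_ne_zero (Nat.one_le_iff_ne_zero.mp (le_max_right m 1))
    have hmem : a ∈ LinearMap.ker (y ^ max m 1) := by
      rw [LinearMap.mem_ker, hm0, pow_succ, Module.End.mul_apply, hya, map_zero]
    rw [hker] at hmem
    exact ha.2 (by simpa using hmem)
  · refine ⟨max m 1, ?_⟩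
    ext v
    have hv : (y ^ max m 1) v ∈ LinearMap.range (y ^ max m 1) := LinearMap.mem_range_self _ v
    rw [hrange] at hv
    simpa using hv

lemma relZero (hd : ∀ x : Module.End R A, IsUnit x ∨ IsNilpotent x) [Nontrivial A] :
    ∀ (d : ℕ) (v : Fin d → A),
      (∀ i, ∃ y : Fin d → Module.End R A,
        (∀ j, IsNilpotent (y j)) ∧ v i = ∑ j, y j (v j)) →
      ∀ i, v i = 0 := by
  haveI : Nontrivial (Module.End R A) := end_nontrivial
  intro d
  induction d with
  | zero => intro v _ i; exact Fin.elim0 i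
  | succ d IH =>
    intro v h
    obtain ⟨y0, hy0, hv0⟩ := h 0
    have hu : IsUnit ((1 : Module.End R A) - y0 0) := (hy0 0).isUnit_one_sub
    obtain ⟨w, hw⟩ := hu.exists_left_inv
    set z : Fin d → Module.End R A := fun j => w * y0 j.succ with hz
    have hznil : ∀ j, IsNilpotent (z j) := fun j => nil_mul hd (hy0 j.succ) w
    have e1 : ((1 : Module.End R A) - y0 0) (v 0) = ∑ j : Fin d, y0 j.succ (v j.succ) := by
      rw [LinearMap.sub_apply, Module.End.one_apply]
      exact sub_eq_of_eq_add' (hv0.trans (Fin.sum_univ_succ _))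
    have hv0' : v 0 = ∑ j : Fin d, z j (v j.succ) := by
      calc v 0 = (w * ((1 : Module.End R A) - y0 0)) (v 0) := by
            rw [hw, Module.End.one_apply]
        _ = w (((1 : Module.End R A) - y0 0) (v 0)) := Module.End.mul_apply _ _ _
        _ = w (∑ j : Fin d, y0 j.succ (v j.succ)) := by rw [e1]
        _ = ∑ j : Fin d, z j (v j.succ) := by
            rw [map_sum]; simp [hz, Module.End.mul_apply]
    have h' : ∀ i : Fin d, ∃ y : Fin d → Module.End R A,
        (∀ j, IsNilpotent (y j)) ∧ v i.succ = ∑ j, y j (v j.succ) := by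
      intro i
      obtain ⟨yi, hyi, hvi⟩ := h i.succ
      refine ⟨fun j => yi j.succ + yi 0 * z j,
        fun j => nil_add hd (hyi j.succ) (nil_mul hd (hznil j) (yi 0)), ?_⟩
      calc v i.succ = yi 0 (v 0) + ∑ j : Fin d, yi j.succ (v j.succ) :=
            hvi.trans (Fin.sum_univ_succ _)
        _ = ∑ j : Fin d, (yi 0 * z j) (v j.succ) + ∑ j : Fin d, yi j.succ (v j.succ) := by
            rw [hv0', map_sum]; simp [Module.End.mul_apply]
        _ = ∑ j : Fin d, (yi j.succ + yi 0 * z j) (v j.succ) := by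
            rw [add_comm, ← Finset.sum_add_distrib]
            exact Finset.sum_congr rfl fun j _ => (LinearMap.add_apply _ _ _).symm
    have hzero := IH (fun j => v j.succ) h'
    intro i
    refine Fin.cases ?_ (fun i => hzero i) i
    rw [hv0']
    simp [hzero]

variable (k R A) in
/-- The chain `V 0 = ⊤`, `V (j+1) = span of nilpotent images of `V j`. -/
noncomputable def Vchain : ℕ → Submodule k A
  | 0 => ⊤
  | (j+1) => Submodule.span k
      {x : A | ∃ (n : Module.End R A) (a : A), IsNilpotent n ∧ a ∈ Vchain j ∧ x = n a}

lemma mem_Vchain_succ {j : ℕ} {n : Module.End R A} {a : A}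
    (hn : IsNilpotent n) (ha : a ∈ Vchain k R A j) : n a ∈ Vchain k R A (j+1) :=
  Submodule.subset_span ⟨n, a, hn, ha, rfl⟩

lemma Vchain_succ_le : ∀ j, Vchain k R A (j+1) ≤ Vchain k R A j
  | 0 => le_top
  | (j+1) => by
    rw [Vchain]
    refine Submodule.span_le.mpr ?_
    rintro x ⟨n, a, hn, ha, rfl⟩
    exact mem_Vchain_succ hn (Vchain_succ_le j ha)

lemma Vchain_bot_succ {j : ℕ} (h : Vchain k R A j = ⊥) : Vchain k R A (j+1) = ⊥ := by
  rw [Vchain, eq_bot_iff]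
  refine Submodule.span_le.mpr ?_
  rintro x ⟨n, a, hn, ha, rfl⟩
  rw [h] at ha
  simp only [Submodule.mem_bot] at ha
  simp [ha]

lemma Vchain_eq_bot_of_stab [Nontrivial A]
    (hd : ∀ x : Module.End R A, IsUnit x ∨ IsNilpotent x)
    {j : ℕ} (hEq : Vchain k R A (j+1) = Vchain k R A j) : Vchain k R A j = ⊥ := by
  set U := Vchain k R A j with hU
  set d := Module.finrank k U with hdj
  set u : Module.Basis (Fin d) k U := Module.finBasis k U
  -- the submodule of "nilpotent combinations" of the basis
  set W : Submodule k A :=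
    { carrier := {x : A | ∃ y : Fin d → Module.End R A,
        (∀ l, IsNilpotent (y l)) ∧ x = ∑ l, y l (u l : A)}
      add_mem' := by
        rintro x₁ x₂ ⟨y₁, hy₁, rfl⟩ ⟨y₂, hy₂, rfl⟩
        exact ⟨fun l => y₁ l + y₂ l, fun l => nil_add hd (hy₁ l) (hy₂ l), by
          rw [← Finset.sum_add_distrib]
          exact Finset.sum_congr rfl fun l _ => (LinearMap.add_apply _ _ _).symm⟩
      zero_mem' := ⟨0, fun l => IsNilpotent.zero, by simp⟩
      smul_mem' := by
        rintro c x ⟨y, hy, rfl⟩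
        exact ⟨fun l => c • y l, fun l => nil_smul hd (hy l) c, by
          rw [Finset.smul_sum]
          exact Finset.sum_congr rfl fun l _ => (LinearMap.smul_apply _ _ _).symm⟩ } with hW
  have hsub : Vchain k R A (j+1) ≤ W := by
    rw [Vchain]
    refine Submodule.span_le.mpr ?_
    rintro x ⟨n, a, hn, ha, rfl⟩
    have ha' : (⟨a, ha⟩ : U) = ∑ l, u.repr ⟨a, ha⟩ l • u l := (u.sum_repr _).symm
    have haA : a = ∑ l, u.repr ⟨a, ha⟩ l • (u l : A) := by
      have := congrArg (Submodule.subtype U) ha'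
      rw [map_sum] at this
      simpa using this
    refine ⟨fun l => u.repr ⟨a, ha⟩ l • n, fun l => nil_smul hd hn _, ?_⟩
    conv_lhs => rw [haA]
    rw [map_sum]
    exact Finset.sum_congr rfl fun l _ => by
      rw [LinearMap.map_smul_of_tower, LinearMap.smul_apply]
  have hrel : ∀ i : Fin d, ∃ y : Fin d → Module.End R A,
      (∀ l, IsNilpotent (y l)) ∧ (u i : A) = ∑ l, y l (u l : A) := by
    intro i
    have : (u i : A) ∈ Vchain k R A (j+1) := by
      rw [hEq]; exact (u i).2
    exact hsub this
  have hzero := relZero hd d (fun i => (u i : A)) hrel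
  have hd0 : d = 0 := by
    rcases Nat.eq_zero_or_pos d with h0 | hpos
    · exact h0
    · exact absurd (Subtype.ext (hzero ⟨0, hpos⟩)) (u.ne_zero ⟨0, hpos⟩)
  have hfr : Module.finrank k U = 0 := by rw [← hdj, hd0]
  exact Submodule.finrank_eq_zero.mp hfr

lemma Vchain_finrank_eq_bot [Nontrivial A]
    (hd : ∀ x : Module.End R A, IsUnit x ∨ IsNilpotent x) :
    Vchain k R A (Module.finrank k A) = ⊥ := by
  set n := Module.finrank k A
  have key : ∀ j, Vchain k R A j = ⊥ ∨ Module.finrank k (Vchain k R A j) + j ≤ n := by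
    intro j
    induction j with
    | zero =>
      right
      rw [show Vchain k R A 0 = (⊤ : Submodule k A) from rfl, finrank_top]
      simp [n]
    | succ j IH =>
      rcases IH with hbot | hle
      · exact Or.inl (Vchain_bot_succ hbot)
      by_cases heq : Vchain k R A (j+1) = Vchain k R A j
      · exact Or.inl (heq ▸ Vchain_eq_bot_of_stab hd heq)
      · right
        have hlt : Vchain k R A (j+1) < Vchain k R A j :=
          lt_of_le_of_ne (Vchain_succ_le j) heq
        have := Submodule.finrank_lt_finrank_of_lt hlt
        omega
  rcases key n with hbot | hle
  · exact hbot
  · have : Module.finrank k (Vchain k R A n) = 0 := by omega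
    exact Submodule.finrank_eq_zero.mp this

end Main
end BCIndec

namespace BCIndec
section TensorSide

variable {k : Type*} [Field k] [IsAlgClosed k]
    {R : Type*} [Ring R] [Algebra k R] [FiniteDimensional k R]
    {A : Type*} [AddCommGroup A] [Module R A] [Module k A] [IsScalarTower k R A]
    [FiniteDimensional k A]
    {F : Type*} [Field F] [Algebra k F]
    [Module (F ⊗[k] R) (F ⊗[k] A)]

lemma tmul_one_comm (c : F) (z : F ⊗[k] R) : Commute (c ⊗ₜ[k] (1:R)) z := by
  induction z using TensorProduct.induction_on with
  | zero => exact Commute.zero_right _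
  | tmul f r =>
    show _ = _
    rw [Algebra.TensorProduct.tmul_mul_tmul, Algebra.TensorProduct.tmul_mul_tmul,
      one_mul, mul_one, mul_comm]
  | add u v hu hv => exact hu.add_right hv

variable (k R A F) in
/-- The central endomorphism `x ↦ (c ⊗ 1) • x`. -/
noncomputable def sig (c : F) : Module.End (F ⊗[k] R) (F ⊗[k] A) where
  toFun x := (c ⊗ₜ[k] (1:R)) • x
  map_add' x y := smul_add _ x y
  map_smul' z x := by
    simp only [RingHom.id_apply]
    rw [← mul_smul, ← mul_smul, (tmul_one_comm c z).eq]

@[simp] lemma sig_apply (c : F) (x : F ⊗[k] A) : sig k R A F c x = (c ⊗ₜ[k] (1:R)) • x := rfl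

lemma sig_one : sig k R A F 1 = 1 := by
  ext x
  show ((1:F) ⊗ₜ[k] (1:R)) • x = x
  rw [← Algebra.TensorProduct.one_def, one_smul]

lemma sig_zero : sig k R A F 0 = 0 := by
  ext x
  show ((0:F) ⊗ₜ[k] (1:R)) • x = 0
  rw [TensorProduct.zero_tmul, zero_smul]

lemma sig_mul (c d : F) : sig k R A F (c * d) = sig k R A F c * sig k R A F d := by
  ext x
  show ((c*d) ⊗ₜ[k] (1:R)) • x = (c ⊗ₜ[k] (1:R)) • ((d ⊗ₜ[k] (1:R)) • x)
  rw [← mul_smul, Algebra.TensorProduct.tmul_mul_tmul, one_mul]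

lemma sig_sub (c d : F) : sig k R A F (c - d) = sig k R A F c - sig k R A F d := by
  ext x
  show ((c - d) ⊗ₜ[k] (1:R)) • x = (c ⊗ₜ[k] (1:R)) • x - (d ⊗ₜ[k] (1:R)) • x
  rw [TensorProduct.sub_tmul, sub_smul]

lemma sig_pow (c : F) : ∀ j : ℕ, sig k R A F (c ^ j) = (sig k R A F c) ^ j
  | 0 => by rw [pow_zero, pow_zero, sig_one]
  | (j+1) => by rw [pow_succ, pow_succ, sig_mul, sig_pow c j]

lemma sig_commute (c : F) (ψ : Module.End (F ⊗[k] R) (F ⊗[k] A)) :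
    Commute (sig k R A F c) ψ := by
  show _ = _
  ext x
  show (c ⊗ₜ[k] (1:R)) • ψ x = ψ ((c ⊗ₜ[k] (1:R)) • x)
  rw [map_smul]

variable (hsmul : ∀ (f g : F) (r : R) (a : A),
      (f ⊗ₜ[k] r : F ⊗[k] R) • (g ⊗ₜ[k] a : F ⊗[k] A) = (f * g) ⊗ₜ[k] (r • a))

include hsmul in
lemma tmul_one_smul (f : F) (x : F ⊗[k] A) : (f ⊗ₜ[k] (1:R)) • x = f • x := by
  induction x using TensorProduct.induction_on with
  | zero => simp
  | tmul g a => rw [hsmul, one_smul, TensorProduct.smul_tmul', smul_eq_mul]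
  | add u v hu hv => rw [smul_add, hu, hv, smul_add]

include hsmul in
lemma E_ksmul (ψ : Module.End (F ⊗[k] R) (F ⊗[k] A)) (t : k) (x : F ⊗[k] A) :
    ψ (t • x) = t • ψ x := by
  have h : ∀ w : F ⊗[k] A, t • w = ((algebraMap k F t) ⊗ₜ[k] (1:R) : F ⊗[k] R) • w := by
    intro w
    rw [tmul_one_smul hsmul, algebraMap_smul]
  rw [h, map_smul, ← h]

lemma nontrivFA [Nontrivial A] : Nontrivial (F ⊗[k] A) := by
  have hpos : 0 < Module.finrank k A := Module.finrank_pos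
  set bA : Module.Basis (Fin (Module.finrank k A)) k A := Module.finBasis k A
  set bF := Algebra.TensorProduct.basis F bA
  exact nontrivial_of_ne (bF ⟨0, hpos⟩) 0 (bF.ne_zero _)

include hsmul in
lemma sig_nil_zero [Nontrivial A] {t : F} (h : IsNilpotent (sig k R A F t)) : t = 0 := by
  haveI : Nontrivial (F ⊗[k] A) := nontrivFA
  obtain ⟨j, hj⟩ := h
  rcases Nat.eq_zero_or_pos j with rfl | hjpos
  · exfalso
    rw [pow_zero] at hj
    obtain ⟨x, y, hxy⟩ := exists_pair_ne (F ⊗[k] A)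
    have : x - y = 0 := by
      have h1 := LinearMap.ext_iff.mp hj (x - y)
      simpa using h1
    exact hxy (by rwa [sub_eq_zero] at this)
  · have hpos : 0 < Module.finrank k A := Module.finrank_pos
    set bA : Module.Basis (Fin (Module.finrank k A)) k A := Module.finBasis k A
    set bF := Algebra.TensorProduct.basis F bA with hbF
    rw [← sig_pow] at hj
    have h1 := LinearMap.ext_iff.mp hj ((1:F) ⊗ₜ[k] (bA ⟨0, hpos⟩))
    rw [sig_apply, hsmul, mul_one, one_smul, LinearMap.zero_apply] at h1
    -- h1 : t^j ⊗ₜ bA i0 = 0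
    have h2 : (t^j) • bF ⟨0, hpos⟩ = 0 := by
      rw [hbF, Algebra.TensorProduct.basis_apply, TensorProduct.smul_tmul', smul_eq_mul, mul_one]
      exact h1
    have h3 : t ^ j = 0 := by
      by_contra hne
      have := congrArg (fun w => (t^j)⁻¹ • w) h2
      simp only [smul_zero, inv_smul_smul₀ hne] at this
      exact bF.ne_zero _ this
    have := pow_eq_zero_iff (Nat.pos_iff_ne_zero.mp hjpos) |>.mp h3
    exact this

include hsmul in
lemma decomp [Nontrivial A]
    (hA2 : ∀ p' q' : Submodule R A, IsCompl p' q' → p' = ⊥ ∨ q' = ⊥)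
    (φ : Module.End (F ⊗[k] R) (F ⊗[k] A)) :
    ∃ c : F, IsNilpotent (φ - sig k R A F c) := by
  classical
  haveI : Nontrivial (Module.End R A) := end_nontrivial
  have hd : ∀ x : Module.End R A, IsUnit x ∨ IsNilpotent x :=
    dichotomy_of_eig (k := k) (fun x => eig_nil hA2 x)
  set S := Module.Basis.ofVectorSpaceIndex k F
  set bk : Module.Basis S k F := Module.Basis.ofVectorSpace k F with hbk
  set e : (F ⊗[k] A) ≃ₗ[k] (S →₀ A) :=
    (TensorProduct.congr bk.repr (LinearEquiv.refl k A)).trans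
      (TensorProduct.finsuppScalarLeft k A S) with he
  have ecoord : ∀ (g : F) (a : A) (s : S), e (g ⊗ₜ[k] a) s = bk.repr g s • a := by
    intro g a s
    simp [he, TensorProduct.finsuppScalarLeft_apply_tmul_apply]
  have erec : ∀ x : F ⊗[k] A, ((e x).sum fun s v => bk s ⊗ₜ[k] v) = x := by
    intro x
    induction x using TensorProduct.induction_on with
    | zero => simp
    | tmul g a =>
      have h1 : e (g ⊗ₜ[k] a) = (bk.repr g).sum fun s c => Finsupp.single s (c • a) := by
        simp [he, TensorProduct.finsuppScalarLeft_apply_tmul]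
      rw [h1]
      rw [Finsupp.sum_sum_index (by intro s; simp) (by intro s v w; simp [TensorProduct.tmul_add])]
      have h2 : ∀ (s : S) (c : k), (Finsupp.single s (c • a)).sum (fun s' v => bk s' ⊗ₜ[k] v)
          = (c • bk s) ⊗ₜ[k] a := by
        intro s c
        rw [Finsupp.sum_single_index (by simp)]
        rw [TensorProduct.smul_tmul, TensorProduct.tmul_smul]
      calc ((bk.repr g).sum fun s c => (Finsupp.single s (c • a)).sum fun s' v => bk s' ⊗ₜ[k] v)
          = (bk.repr g).sum fun s c => (c • bk s) ⊗ₜ[k] a := by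
            exact Finsupp.sum_congr fun s _ => h2 s _
        _ = ((bk.repr g).sum fun s c => c • bk s) ⊗ₜ[k] a := by
            rw [Finsupp.sum, Finsupp.sum, TensorProduct.sum_tmul]
        _ = g ⊗ₜ[k] a := by
            rw [← Finsupp.linearCombination_apply, bk.linearCombination_repr]
    | add u v hu hv => rw [map_add, Finsupp.sum_add_index (by simp) (by intros; simp [TensorProduct.tmul_add]), hu, hv]
  -- the coordinate functions of φ ∘ (1 ⊗ ·), as a linear map
  set Θ : A →ₗ[k] (S →₀ A) :=
    { toFun := fun a => e (φ ((1:F) ⊗ₜ[k] a))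
      map_add' := fun a b => by simp only [TensorProduct.tmul_add, map_add]
      map_smul' := fun t a => by
        simp only [RingHom.id_apply, TensorProduct.tmul_smul, E_ksmul hsmul, map_smul] } with hΘ
  have Θapp : ∀ a, Θ a = e (φ ((1:F) ⊗ₜ[k] a)) := fun a => rfl
  -- R-equivariance of coordinates
  have ΘR : ∀ (r : R) (a : A) (s : S), Θ (r • a) s = r • Θ a s := by
    intro r a s
    have key : ∀ x : F ⊗[k] A, e (((1:F) ⊗ₜ[k] r : F ⊗[k] R) • x) s = r • e x s := by
      intro x
      induction x using TensorProduct.induction_on with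
      | zero => simp
      | tmul g a' => rw [hsmul, one_mul, ecoord, ecoord, smul_comm]
      | add u v hu hv =>
        rw [smul_add, map_add, map_add, Finsupp.add_apply, Finsupp.add_apply, hu, hv, smul_add]
    have h1 : ((1:F) ⊗ₜ[k] a : F ⊗[k] A) = ((1:F) ⊗ₜ[k] (1:R) : F ⊗[k] R) • ((1:F) ⊗ₜ[k] a) := by
      rw [hsmul, one_mul, one_smul]
    have h2 : ((1:F) ⊗ₜ[k] (r • a) : F ⊗[k] A)
        = ((1:F) ⊗ₜ[k] r : F ⊗[k] R) • ((1:F) ⊗ₜ[k] a) := by rw [hsmul, one_mul]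
    rw [Θapp, Θapp, h2, map_smul, key]
  -- endomorphisms
  set Φ : S → Module.End R A := fun s =>
    { toFun := fun a => Θ a s
      map_add' := fun a b => by simp only [map_add, Finsupp.add_apply]
      map_smul' := fun r a => by simp only [RingHom.id_apply]; exact ΘR r a s } with hΦ
  -- support
  set n := Module.finrank k A with hn
  set bA : Module.Basis (Fin n) k A := Module.finBasis k A with hbA
  set T : Finset S := Finset.univ.biUnion (fun i => (Θ (bA i)).support) with hT
  have hsupp : ∀ a : A, (Θ a).support ⊆ T := by
    intro a s hs
    have ha : a = ∑ i, bA.repr a i • bA i := (bA.sum_repr a).symm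
    have hΘa : Θ a = ∑ i, bA.repr a i • Θ (bA i) := by
      conv_lhs => rw [ha]
      rw [map_sum]
      exact Finset.sum_congr rfl fun i _ => by rw [map_smul]
    rw [hΘa] at hs
    obtain ⟨i, _, hi⟩ := Finsupp.mem_support_finset_sum s hs
    have : s ∈ (Θ (bA i)).support := Finsupp.support_smul hi
    exact Finset.mem_biUnion.mpr ⟨i, Finset.mem_univ i, this⟩
  -- eigenvalue decompositions
  choose lam nilpf using fun s => eig_nil (k := k) hA2 (Φ s)
  set Nn : S → Module.End R A := fun s => Φ s - lam s • 1 with hNn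
  have lam0 : ∀ s, s ∉ T → lam s = 0 := by
    intro s hs
    have hΦ0 : Φ s = 0 := by
      ext a
      show Θ a s = 0
      exact Finsupp.notMem_support_iff.mp (fun hmem => hs (hsupp a hmem))
    have hnil : IsNilpotent (-(lam s • (1 : Module.End R A))) := by
      have := nilpf s
      rwa [hΦ0, zero_sub] at this
    exact smul_one_nilpotent_eq_zero (neg_neg (lam s • (1 : Module.End R A)) ▸ hnil.neg)
  set c : F := ∑ s ∈ T, lam s • bk s with hc
  refine ⟨c, ?_⟩
  set ν : Module.End (F ⊗[k] R) (F ⊗[k] A) := φ - sig k R A F c with hν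
  -- the formula for φ on 1 ⊗ a
  have hrecφ : ∀ a : A, φ ((1:F) ⊗ₜ[k] a) = ∑ s ∈ T, bk s ⊗ₜ[k] (Φ s a) := by
    intro a
    have h1 := erec (φ ((1:F) ⊗ₜ[k] a))
    rw [Finsupp.sum] at h1
    have h2 : ∑ s ∈ (e (φ ((1:F) ⊗ₜ[k] a))).support, bk s ⊗ₜ[k] (e (φ ((1:F) ⊗ₜ[k] a)) s)
        = ∑ s ∈ T, bk s ⊗ₜ[k] (e (φ ((1:F) ⊗ₜ[k] a)) s) := by
      refine Finset.sum_subset (hsupp a) ?_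
      intro s _ hns
      rw [Finsupp.notMem_support_iff.mp hns, TensorProduct.tmul_zero]
    rw [h2] at h1
    rw [← h1]
    rfl
  -- formula for ν on pure tensors
  have hνform : ∀ (f : F) (a : A), ν (f ⊗ₜ[k] a) = ∑ s ∈ T, (f * bk s) ⊗ₜ[k] (Nn s a) := by
    intro f a
    have hfa : (f ⊗ₜ[k] a : F ⊗[k] A) = (f ⊗ₜ[k] (1:R) : F ⊗[k] R) • ((1:F) ⊗ₜ[k] a) := by
      rw [hsmul, mul_one, one_smul]
    have hφfa : φ (f ⊗ₜ[k] a) = ∑ s ∈ T, (f * bk s) ⊗ₜ[k] (Φ s a) := by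
      rw [hfa, map_smul, hrecφ, Finset.smul_sum]
      exact Finset.sum_congr rfl fun s _ => by rw [hsmul, one_smul]
    have hσfa : sig k R A F c (f ⊗ₜ[k] a) = ∑ s ∈ T, (f * bk s) ⊗ₜ[k] (lam s • a) := by
      rw [sig_apply, hsmul, one_smul, hc, Finset.sum_mul, TensorProduct.sum_tmul]
      refine Finset.sum_congr rfl fun s _ => ?_
      rw [smul_mul_assoc, TensorProduct.smul_tmul, mul_comm (bk s) f]
    rw [hν, LinearMap.sub_apply, hφfa, hσfa, ← Finset.sum_sub_distrib]
    refine Finset.sum_congr rfl fun s _ => ?_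
    rw [← TensorProduct.tmul_sub]
    congr 1
  -- chain argument
  have hVbot := Vchain_finrank_eq_bot (k := k) (R := R) (A := A) hd
  set Z : ℕ → Submodule k (F ⊗[k] A) := fun j => Submodule.span k
    {x : F ⊗[k] A | ∃ (f : F) (a : A), a ∈ Vchain k R A j ∧ x = f ⊗ₜ[k] a} with hZ
  have hZstep : ∀ j, ∀ x ∈ Z j, ν x ∈ Z (j+1) := by
    intro j x hx
    refine Submodule.span_induction ?_ ?_ ?_ ?_ hx
    · rintro y ⟨f, a, ha, rfl⟩
      rw [hνform]
      refine Submodule.sum_mem _ fun s _ => ?_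
      exact Submodule.subset_span ⟨f * bk s, Nn s a, mem_Vchain_succ (nilpf s) ha, rfl⟩
    · rw [map_zero]; exact (Z (j+1)).zero_mem
    · intro y z _ _ hy hz
      rw [map_add]; exact (Z (j+1)).add_mem hy hz
    · intro t y _ hy
      rw [E_ksmul hsmul]; exact (Z (j+1)).smul_mem t hy
  have hZ0 : ∀ x : F ⊗[k] A, x ∈ Z 0 := by
    intro x
    have htop : Z 0 = ⊤ := by
      simp only [hZ]
      have hset : {x : F ⊗[k] A | ∃ (f : F) (a : A), a ∈ Vchain k R A 0 ∧ x = f ⊗ₜ[k] a}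
          = {t : F ⊗[k] A | ∃ f a, f ⊗ₜ[k] a = t} := by
        ext y
        constructor
        · rintro ⟨f, a, _, rfl⟩; exact ⟨f, a, rfl⟩
        · rintro ⟨f, a, rfl⟩; exact ⟨f, a, Submodule.mem_top, rfl⟩
      rw [hset]
      exact TensorProduct.span_tmul_eq_top k F A
    rw [htop]; exact Submodule.mem_top
  have hiter : ∀ (j : ℕ) (i : ℕ) (x : F ⊗[k] A), x ∈ Z i → (ν ^ j) x ∈ Z (i + j) := by
    intro j
    induction j with
    | zero => intro i x hx; rw [pow_zero]; simpa using hx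
    | succ j IH =>
      intro i x hx
      rw [pow_succ, Module.End.mul_apply]
      have := IH (i+1) (ν x) (hZstep i x hx)
      rwa [show i + 1 + j = i + (j+1) by omega] at this
  refine ⟨n, ?_⟩
  ext x
  have hmem := hiter n 0 x (hZ0 x)
  rw [zero_add] at hmem
  have hZn : ∀ y ∈ Z n, y = 0 := by
    intro y hy
    rw [hZ] at hy
    have : {x : F ⊗[k] A | ∃ (f : F) (a : A), a ∈ Vchain k R A n ∧ x = f ⊗ₜ[k] a} ⊆ {0} := by
      rintro y ⟨f, a, ha, rfl⟩
      rw [hVbot] at ha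
      simp only [Submodule.mem_bot] at ha
      simp [ha]
    have hle := Submodule.span_le.mpr (this.trans (by simp : ({0} : Set (F ⊗[k] A)) ⊆ (⊥ : Submodule k (F ⊗[k] A))))
    simpa using hle hy
  simp [hZn _ hmem]

end TensorSide
end BCIndec

/-- **Lemma (indecomposability is preserved by base change from an algebraically closed
field).** Suppose `k` is algebraically closed, `R` is a finite-dimensional `k`-algebra, and
`A` is a finite-dimensional indecomposable `R`-module.  Then for any field extension `F/k`,
the base change `F ⊗_k A` is an indecomposable module over the `F`-algebra `F ⊗_k R`
(the module structure being the canonical one, characterized on pure tensors by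
`(f ⊗ r) • (g ⊗ a) = (f*g) ⊗ (r • a)`). -/
theorem baseChange_indecomposable_of_isAlgClosed
    (k : Type*) [Field k] [IsAlgClosed k]
    (R : Type*) [Ring R] [Algebra k R] [FiniteDimensional k R]
    (A : Type*) [AddCommGroup A] [Module R A] [Module k A] [IsScalarTower k R A]
    [FiniteDimensional k A]
    (hA : Nontrivial A ∧ ∀ p q : Submodule R A, IsCompl p q → p = ⊥ ∨ q = ⊥)
    (F : Type*) [Field F] [Algebra k F]
    [Module (F ⊗[k] R) (F ⊗[k] A)]
    (hsmul : ∀ (f g : F) (r : R) (a : A),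
      (f ⊗ₜ[k] r : F ⊗[k] R) • (g ⊗ₜ[k] a : F ⊗[k] A) = (f * g) ⊗ₜ[k] (r • a)) :
    Nontrivial (F ⊗[k] A) ∧
      ∀ p q : Submodule (F ⊗[k] R) (F ⊗[k] A), IsCompl p q → p = ⊥ ∨ q = ⊥ := by
  classical
  obtain ⟨hA1, hA2⟩ := hA
  haveI : Nontrivial A := hA1
  refine ⟨BCIndec.nontrivFA, ?_⟩
  intro p q hpq
  set φ : Module.End (F ⊗[k] R) (F ⊗[k] A) :=
    p.subtype ∘ₗ (p.linearProjOfIsCompl q hpq) with hφ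
  have hφp : ∀ x ∈ p, φ x = x := by
    intro x hx
    show (p.subtype (p.linearProjOfIsCompl q hpq x)) = x
    have h1 : p.linearProjOfIsCompl q hpq ((⟨x, hx⟩ : p) : F ⊗[k] A) = ⟨x, hx⟩ :=
      Submodule.linearProjOfIsCompl_apply_left hpq ⟨x, hx⟩
    rw [show (((⟨x, hx⟩ : p) : F ⊗[k] A)) = x from rfl] at h1
    rw [h1]
    rfl
  have hφq : ∀ x ∈ q, φ x = 0 := by
    intro x hx
    show (p.subtype (p.projectionOnto q hpq x)) = 0
    rw [Submodule.linearProjOfIsCompl_apply_right' hpq hx, map_zero]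
  have hφmem : ∀ x, φ x ∈ p := fun x => (p.linearProjOfIsCompl q hpq x).2
  have hidem : φ * φ = φ := by
    ext x
    rw [Module.End.mul_apply]
    exact hφp _ (hφmem x)
  clear_value φ
  obtain ⟨c, hcnil⟩ := BCIndec.decomp hsmul hA2 φ
  set ν : Module.End (F ⊗[k] R) (F ⊗[k] A) := φ - BCIndec.sig k R A F c with hν
  clear_value ν
  have hσφ : Commute (BCIndec.sig k R A F c) φ := BCIndec.sig_commute c φ
  have hφν : Commute φ ν := by rw [hν]; exact (Commute.refl φ).sub_right (R := Module.End (F ⊗[k] R) (F ⊗[k] A)) hσφ.symm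
  have hkey : BCIndec.sig k R A F (c * c - c) = ν * (1 - φ - φ + ν) := by
    rw [BCIndec.sig_sub, BCIndec.sig_mul]
    have hs : BCIndec.sig k R A F c = φ - ν := by rw [hν]; abel
    rw [hs]
    calc (φ - ν) * (φ - ν) - (φ - ν)
        = (φ * φ - φ * ν) - (ν * φ - ν * ν) - (φ - ν) := by rw [sub_mul (α := Module.End (F ⊗[k] R) (F ⊗[k] A)), mul_sub (α := Module.End (F ⊗[k] R) (F ⊗[k] A)), mul_sub (α := Module.End (F ⊗[k] R) (F ⊗[k] A))]
      _ = ν * 1 - ν * φ - ν * φ + ν * ν := by rw [hidem, hφν.eq, mul_one]; abel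
      _ = ν * (1 - φ - φ + ν) := by rw [mul_add (R := Module.End (F ⊗[k] R) (F ⊗[k] A)), mul_sub (α := Module.End (F ⊗[k] R) (F ⊗[k] A)), mul_sub (α := Module.End (F ⊗[k] R) (F ⊗[k] A))]
  have hnilkey : IsNilpotent (BCIndec.sig k R A F (c * c - c)) := by
    rw [hkey]
    have hcomm : Commute ν (1 - φ - φ + ν) :=
      (((Commute.one_right ν).sub_right (R := Module.End (F ⊗[k] R) (F ⊗[k] A)) hφν.symm).sub_right (R := Module.End (F ⊗[k] R) (F ⊗[k] A)) hφν.symm).add_right (R := Module.End (F ⊗[k] R) (F ⊗[k] A)) (Commute.refl ν)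
    exact hcomm.isNilpotent_mul_right hcnil
  have hcc : c * c - c = 0 := BCIndec.sig_nil_zero hsmul hnilkey
  have hc01 : c = 0 ∨ c = 1 := by
    have h1 : c * (c - 1) = 0 := by linear_combination hcc
    rcases mul_eq_zero.mp h1 with h | h
    · exact Or.inl h
    · exact Or.inr (by rwa [sub_eq_zero] at h)
  have hpow : ∀ (ψ : Module.End (F ⊗[k] R) (F ⊗[k] A)), ψ * ψ = ψ → ∀ j, ψ ^ (j + 1) = ψ := by
    intro ψ hψ j
    induction j with
    | zero => rw [pow_one]
    | succ j IH => rw [pow_succ, IH, hψ]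
  rcases hc01 with h0 | h1
  · left
    have hφ0 : φ = 0 := by
      have hh : ν = φ := by rw [hν, h0, BCIndec.sig_zero, sub_zero (G := Module.End (F ⊗[k] R) (F ⊗[k] A))]
      rw [hh] at hcnil
      obtain ⟨j, hj⟩ := hcnil
      have h2 := hpow φ hidem j
      rw [pow_succ, hj, zero_mul] at h2
      exact h2.symm
    refine (Submodule.eq_bot_iff p).mpr fun x hx => ?_
    rw [← hφp x hx, hφ0, LinearMap.zero_apply]
  · right
    have hφ1 : φ = 1 := by
      have hν1 : ν = φ - 1 := by rw [hν, h1, BCIndec.sig_one]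
      have hnil1 : IsNilpotent ((1 : Module.End (F ⊗[k] R) (F ⊗[k] A)) - φ) := by
        have hh : (1 : Module.End (F ⊗[k] R) (F ⊗[k] A)) - φ = -ν := by rw [hν1]; abel
        rw [hh]
        exact hcnil.neg (R := Module.End (F ⊗[k] R) (F ⊗[k] A))
      have hid2 : ((1 : Module.End (F ⊗[k] R) (F ⊗[k] A)) - φ) * (1 - φ) = 1 - φ := by
        calc ((1 : Module.End (F ⊗[k] R) (F ⊗[k] A)) - φ) * (1 - φ)
            = (1 * 1 - 1 * φ) - (φ * 1 - φ * φ) := by rw [sub_mul (α := Module.End (F ⊗[k] R) (F ⊗[k] A)), mul_sub (α := Module.End (F ⊗[k] R) (F ⊗[k] A)), mul_sub (α := Module.End (F ⊗[k] R) (F ⊗[k] A))]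
          _ = 1 - φ := by rw [hidem, one_mul, one_mul, mul_one]; abel
      obtain ⟨j, hj⟩ := hnil1
      have h2 := hpow _ hid2 j
      rw [pow_succ, hj, zero_mul] at h2
      have h3 : (1 : Module.End (F ⊗[k] R) (F ⊗[k] A)) - φ = 0 := h2.symm
      have := (sub_eq_zero (G := Module.End (F ⊗[k] R) (F ⊗[k] A))).mp h3
      exact this.symm
    refine (Submodule.eq_bot_iff q).mpr fun x hx => ?_
    have h4 := hφq x hx
    rw [hφ1, Module.End.one_apply] at h4
    exact h4
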